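/- Let a ∈ (0,1) and r ∈ (0, π/2) with cos r < √(1 − a²). Let x : ℝ → ℝ be twice differentiable on [0, ∞) with x''(s) = −2·(1 + 4a² − x(s)²/(1 − a²))·x(s) for all s ≥ 0, x(0) = √(1 − a²), and x'(0) = 0. Then there exists a unique s_r > 0 such that x(s_r) = cos r and x(s) > cos r for all s ∈ [0, s_r). -/

import Mathlib

open Set

set_option maxHeartbeats 1000000

/-- **Existence and uniqueness of the first crossing time of the level `cos r`.**
Let `a ∈ (0,1)` and `r ∈ (0, π/2)` with `cos r < √(1 − a²)`. If `x` solves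
`x'' = −2(1 + 4a² − x²/(1 − a²))·x` on `[0, ∞)` with `x(0) = √(1 − a²)`, `x'(0) = 0`,
then there is a unique `s_r > 0` with `x(s_r) = cos r` and `x > cos r` on `[0, s_r)`. -/
theorem decoupled_ode_first_crossing
    (a : ℝ) (ha : a ∈ Set.Ioo (0 : ℝ) 1)
    (r : ℝ) (hr : r ∈ Set.Ioo (0 : ℝ) (Real.pi / 2))
    (hcos : Real.cos r < Real.sqrt (1 - a ^ 2))
    (x x' x'' : ℝ → ℝ)
    (hx : ∀ s ∈ Set.Ici (0 : ℝ), HasDerivAt x (x' s) s)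
    (hx' : ∀ s ∈ Set.Ici (0 : ℝ), HasDerivAt x' (x'' s) s)
    (hODE : ∀ s ∈ Set.Ici (0 : ℝ),
      x'' s = -2 * (1 + 4 * a ^ 2 - (x s) ^ 2 / (1 - a ^ 2)) * x s)
    (hx0 : x 0 = Real.sqrt (1 - a ^ 2)) (hx'0 : x' 0 = 0) :
    ∃! sr : ℝ, 0 < sr ∧ x sr = Real.cos r ∧
      ∀ s ∈ Set.Ico (0 : ℝ) sr, Real.cos r < x s := by
  obtain ⟨ha0, ha1⟩ := ha
  set b : ℝ := 1 - a ^ 2 with hb_def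
  set c : ℝ := Real.cos r with hc_def
  have hb : 0 < b := by nlinarith
  have hc : 0 < c := Real.cos_pos_of_mem_Ioo ⟨by linarith [hr.1, Real.pi_pos], hr.2⟩
  have hsqb : Real.sqrt b ^ 2 = b := Real.sq_sqrt hb.le
  have hcb : c < Real.sqrt b := hcos
  -- continuity of x, x' on Ici 0
  have hcontx : ContinuousOn x (Ici 0) := fun s hs => (hx s hs).continuousAt.continuousWithinAt
  have hcontx' : ContinuousOn x' (Ici 0) := fun s hs => (hx' s hs).continuousAt.continuousWithinAt
  -- Energy conservation
  set E : ℝ → ℝ := fun t => x' t ^ 2 + 2 * (1 + 4 * a ^ 2) * x t ^ 2 - x t ^ 4 / b with hE_def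
  have hEderiv : ∀ s ∈ Ici (0 : ℝ), HasDerivAt E 0 s := by
    intro s hs
    have h1 := (hx' s hs).pow 2
    have h2 := ((hx s hs).pow 2).const_mul (2 * (1 + 4 * a ^ 2))
    have h3 := ((hx s hs).pow 4).div_const b
    have h := (h1.add h2).sub h3
    refine h.congr_deriv (Eq.symm ?_)
    rw [hODE s hs]
    push_cast
    field_simp
    ring
  have hcontE : ContinuousOn E (Ici 0) := fun s hs =>
    (hEderiv s hs).continuousAt.continuousWithinAt
  have hEconst : ∀ s ∈ Ici (0 : ℝ), E s = E 0 := by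
    intro s hs
    have := constant_of_has_deriv_right_zero
      (f := E) (a := 0) (b := s)
      (hcontE.mono (Icc_subset_Ici_self))
      (fun t ht => (hEderiv t ht.1).hasDerivWithinAt)
    exact this s ⟨hs, le_refl s⟩
  have hE0 : E 0 = b * (1 + 8 * a ^ 2) := by
    have h4 : x 0 ^ 4 = b ^ 2 := by
      rw [hx0]; rw [show (Real.sqrt b) ^ 4 = ((Real.sqrt b) ^ 2) ^ 2 by ring, hsqb]
    simp only [hE_def, hx'0, hx0]
    rw [show (Real.sqrt b) ^ 4 = ((Real.sqrt b) ^ 2) ^ 2 by ring, hsqb]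
    field_simp
    ring
  -- the key first integral
  have hE : ∀ s ∈ Ici (0 : ℝ), x' s ^ 2 * b = (b - x s ^ 2) * (b * (1 + 8 * a ^ 2) - x s ^ 2) := by
    intro s hs
    have h := hEconst s hs
    rw [hE0] at h
    simp only [hE_def] at h
    have hbne : b ≠ 0 := hb.ne'
    field_simp at h
    nlinarith [h]
  -- x s ^ 2 ≤ b for all s ≥ 0
  have hxb : ∀ s ∈ Ici (0 : ℝ), x s ^ 2 ≤ b := by
    intro s hs
    by_contra hgt
    push_neg at hgt
    have h2 : b * (1 + 8 * a ^ 2) ≤ x s ^ 2 := by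
      nlinarith [hE s hs, sq_nonneg (x' s)]
    have hcontsq : ContinuousOn (fun t => x t ^ 2) (Icc 0 s) :=
      ((hcontx.mono (Icc_subset_Ici_self)).pow 2)
    have hx02 : x 0 ^ 2 = b := by rw [hx0]; exact hsqb
    have hmid : b * (1 + 4 * a ^ 2) ∈ Icc ((fun t => x t ^ 2) 0) ((fun t => x t ^ 2) s) := by
      simp only [hx02]
      constructor
      · nlinarith
      · nlinarith
    obtain ⟨t, ht, hxt⟩ := intermediate_value_Icc (mem_Ici.mp hs) hcontsq hmid
    have hEt := hE t (mem_Ici.mpr ht.1)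
    simp only at hxt
    rw [hxt] at hEt
    nlinarith [sq_nonneg (x' t), sq_nonneg a, mul_pos hb hb, pow_pos ha0 4]
  -- there is a crossing
  have hcross : ∃ t, 0 ≤ t ∧ x t = c := by
    by_contra hno
    push_neg at hno
    have hgt : ∀ s ∈ Ici (0 : ℝ), c < x s := by
      intro s hs
      rcases lt_or_ge c (x s) with h | h
      · exact h
      have hlt : x s < c := lt_of_le_of_ne h (hno s hs)
      exfalso
      have hcont' : ContinuousOn x (Icc 0 s) := hcontx.mono Icc_subset_Ici_self
      have hmem : c ∈ Icc (x s) (x 0) := ⟨hlt.le, by rw [hx0]; exact hcb.le⟩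
      obtain ⟨t, ht, hxt⟩ := intermediate_value_Icc' (mem_Ici.mp hs) hcont' hmem
      exact hno t ht.1 hxt
    set K : ℝ := 8 * a ^ 2 * c with hK_def
    have hKpos : 0 < K := by positivity
    have hx''le : ∀ s ∈ Ici (0 : ℝ), x'' s ≤ -K := by
      intro s hs
      rw [hODE s hs]
      have h1 : x s ^ 2 ≤ b := hxb s hs
      have h2 : c < x s := hgt s hs
      have h3 : x s ^ 2 / b ≤ 1 := by rw [div_le_one hb]; exact h1
      have h4 : (0:ℝ) ≤ (1 - x s ^ 2 / b) * x s := by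
        apply mul_nonneg (by linarith) (by linarith)
      have h5 : (0:ℝ) ≤ a ^ 2 * (x s - c) := by
        apply mul_nonneg (sq_nonneg a) (by linarith)
      simp only [hK_def]
      nlinarith
    -- x' s + K * s is antitone on Ici 0
    have hanti1 : AntitoneOn (fun s => x' s + K * s) (Ici 0) := by
      apply antitoneOn_of_hasDerivWithinAt_nonpos (f' := fun s => x'' s + K) (convex_Ici 0)
      · exact hcontx'.add (continuousOn_const.mul continuousOn_id)
      · intro s hs
        rw [interior_Ici] at hs
        exact (((hx' s (mem_Ici.mpr (le_of_lt hs))).add ((hasDerivAt_id s).const_mul K)).congr_deriv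
          (by ring)).hasDerivWithinAt
      · intro s hs
        rw [interior_Ici] at hs
        linarith [hx''le s (mem_Ici.mpr (le_of_lt hs))]
    have hle1 : ∀ s ∈ Ici (0 : ℝ), x' s ≤ -K * s := by
      intro s hs
      have := hanti1 (self_mem_Ici) hs (mem_Ici.mp hs)
      simp only [hx'0] at this
      linarith
    -- x s + K * s^2 / 2 is antitone on Ici 0
    have hanti2 : AntitoneOn (fun s => x s + K * s ^ 2 / 2) (Ici 0) := by
      apply antitoneOn_of_hasDerivWithinAt_nonpos (f' := fun s => x' s + K * s) (convex_Ici 0)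
      · exact hcontx.add ((continuousOn_const.mul (continuousOn_pow 2)).div_const 2)
      · intro s hs
        rw [interior_Ici] at hs
        have hd : HasDerivAt (fun t => x t + K * t ^ 2 / 2) (x' s + K * s)
            s := by
          have := (hx s (mem_Ici.mpr (le_of_lt hs))).add ((((hasDerivAt_pow 2 s).const_mul K).div_const 2))
          refine this.congr_deriv (Eq.symm ?_)
          push_cast
          ring
        exact hd.hasDerivWithinAt
      · intro s hs
        rw [interior_Ici] at hs
        linarith [hle1 s (mem_Ici.mpr (le_of_lt hs))]
    -- get contradiction at large s₀
    set s0 : ℝ := Real.sqrt (2 * Real.sqrt b / K) + 1 with hs0_def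
    have hs0nonneg : 0 ≤ s0 := by positivity
    have hsq0 : Real.sqrt (2 * Real.sqrt b / K) ^ 2 = 2 * Real.sqrt b / K := by
      apply Real.sq_sqrt
      positivity
    have hbig : 2 * Real.sqrt b / K < s0 ^ 2 := by
      simp only [hs0_def]
      nlinarith [Real.sqrt_nonneg (2 * Real.sqrt b / K)]
    have h := hanti2 self_mem_Ici (mem_Ici.mpr hs0nonneg) hs0nonneg
    simp only [hx0] at h
    -- h : x s0 + K * s0^2/2 ≤ √b + K * 0 /2
    have hxs0 : c < x s0 := hgt s0 (mem_Ici.mpr hs0nonneg)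
    have hKs : 2 * Real.sqrt b < K * s0 ^ 2 := by
      rw [div_lt_iff₀ hKpos] at hbig
      linarith [hbig]
    have h0 : K * (0:ℝ) ^ 2 / 2 = 0 := by ring
    rw [h0] at h
    clear_value K s0
    linarith [hc, hxs0, h, hKs]
  -- define sr as the infimum of crossing times
  obtain ⟨t0, ht0, hxt0⟩ := hcross
  set A : Set ℝ := Ici 0 ∩ x ⁻¹' {c} with hA_def
  have hAne : A.Nonempty := ⟨t0, ht0, hxt0⟩
  have hAclosed : IsClosed A :=
    hcontx.preimage_isClosed_of_isClosed isClosed_Ici isClosed_singleton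
  have hAbdd : BddBelow A := ⟨0, fun t ht => ht.1⟩
  set sr : ℝ := sInf A with hsr_def
  have hsrA : sr ∈ A := hAclosed.csInf_mem hAne hAbdd
  have hsrnonneg : 0 ≤ sr := hsrA.1
  have hxsr : x sr = c := hsrA.2
  have hsrpos : 0 < sr := by
    rcases lt_or_eq_of_le hsrnonneg with h | h
    · exact h
    · exfalso
      have : x 0 = c := by rw [← h] at hxsr; exact hxsr
      rw [hx0] at this
      linarith [hcb, this]
  have hbefore : ∀ s ∈ Ico (0 : ℝ) sr, c < x s := by
    intro s hs
    rcases lt_or_ge c (x s) with h | h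
    · exact h
    exfalso
    rcases lt_or_eq_of_le h with h' | h'
    · -- x s < c : IVT gives a crossing before s < sr
      have hcont' : ContinuousOn x (Icc 0 s) := hcontx.mono Icc_subset_Ici_self
      have hmem : c ∈ Icc (x s) (x 0) := ⟨h'.le, by rw [hx0]; exact hcb.le⟩
      obtain ⟨t, ht, hxt⟩ := intermediate_value_Icc' hs.1 hcont' hmem
      have htA : t ∈ A := ⟨ht.1, hxt⟩
      have := csInf_le hAbdd htA
      linarith [ht.2, hs.2]
    · -- x s = c : s itself is a crossing before sr
      have hsA : s ∈ A := ⟨hs.1, h'⟩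
      have := csInf_le hAbdd hsA
      linarith [hs.2]
  refine ⟨sr, ⟨hsrpos, hxsr, hbefore⟩, ?_⟩
  rintro y ⟨hy0, hyc, hyb⟩
  by_contra hne
  rcases lt_or_gt_of_ne hne with h | h
  · -- y < sr
    have := hbefore y ⟨hy0.le, h⟩
    rw [hyc] at this
    exact lt_irrefl c this
  · -- sr < y
    have := hyb sr ⟨hsrnonneg, h⟩
    rw [hxsr] at this
    exact lt_irrefl c this
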